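/- The map f is injective: if A₁ = (-(1/2)Σ_w + S₁)Σ₁⁻¹ and A₂ = (-(1/2)Σ_w + S₂)Σ₂⁻¹ with Σᵢ symmetric positive definite and Sᵢ skew-symmetric, and A₁ = A₂, then Σ₁ = Σ₂ and S₁ = S₂. -/

import Mathlib

open Matrix Polynomial

section Helpers

lemma eval_charpoly' {n : ℕ} (M : Matrix (Fin n) (Fin n) ℂ) (μ : ℂ) :
    (M.charpoly).eval μ = (Matrix.scalar (Fin n) μ - M).det := by
  rw [Matrix.charpoly, eval_det, Matrix.matPolyEquiv_charmatrix]
  simp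

lemma mem_spec_iff {n : ℕ} (M : Matrix (Fin n) (Fin n) ℂ) (μ : ℂ) :
    μ ∈ spectrum ℂ M ↔ (Matrix.scalar (Fin n) μ - M).det = 0 := by
  rw [spectrum.mem_iff, Matrix.isUnit_iff_isUnit_det, isUnit_iff_ne_zero, not_ne_iff]
  have : (algebraMap ℂ (Matrix (Fin n) (Fin n) ℂ)) μ = Matrix.scalar (Fin n) μ := by
    ext i j; simp [Matrix.algebraMap_matrix_apply, Matrix.scalar_apply, Matrix.diagonal]
  rw [this]

lemma mem_spec_iff' {n : ℕ} (M : Matrix (Fin n) (Fin n) ℂ) (μ : ℂ) :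
    μ ∈ spectrum ℂ M ↔ (M.charpoly).eval μ = 0 := by
  rw [mem_spec_iff, eval_charpoly']

lemma aeval_semiconj {A : Type*} [Ring A] [Algebra ℂ A] {d b a : A} (h : d * b = a * d)
    (p : ℂ[X]) : d * (aeval b p) = (aeval a p) * d := by
  induction p using Polynomial.induction_on' with
  | add p q hp hq => simp [map_add, mul_add, add_mul, hp, hq]
  | monomial k r =>
    have hpow : ∀ m : ℕ, d * b ^ m = a ^ m * d := by
      intro m
      induction m with
      | zero => simp
      | succ m ih =>
        rw [pow_succ, ← mul_assoc, ih, mul_assoc, h, pow_succ, mul_assoc, ← mul_assoc]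
    simp only [aeval_monomial]
    rw [← mul_assoc, ← Algebra.commutes, mul_assoc, hpow, ← mul_assoc]

lemma quad_pos {n : ℕ} {M : Matrix (Fin n) (Fin n) ℝ} (hM : M.PosDef) (v : Fin n → ℂ)
    (hv : v ≠ 0) :
    ∃ r : ℝ, 0 < r ∧ star v ⬝ᵥ (M.map (Complex.ofReal)) *ᵥ v = (r : ℂ) := by
  classical
  set a : Fin n → ℝ := fun i => (v i).re with ha
  set b : Fin n → ℝ := fun i => (v i).im with hb
  have hsymm : ∀ i j, M j i = M i j := fun i j => congrFun (congrFun hM.1 i) j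
  have expand : star v ⬝ᵥ (M.map (Complex.ofReal)) *ᵥ v
      = ∑ i, ∑ j, (starRingEnd ℂ) (v i) * ((M i j : ℂ) * v j) := by
    simp [dotProduct, mulVec, Finset.mul_sum, Matrix.map_apply]
  have hre : (star v ⬝ᵥ (M.map (Complex.ofReal)) *ᵥ v).re = a ⬝ᵥ M *ᵥ a + b ⬝ᵥ M *ᵥ b := by
    rw [expand]
    rw [Complex.re_sum]
    simp only [Complex.re_sum, dotProduct, mulVec, Finset.mul_sum]
    rw [← Finset.sum_add_distrib]
    refine Finset.sum_congr rfl fun i _ => ?_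
    rw [← Finset.sum_add_distrib]
    refine Finset.sum_congr rfl fun j _ => ?_
    simp only [Complex.mul_re, Complex.mul_im, Complex.ofReal_re, Complex.ofReal_im,
      Complex.conj_re, Complex.conj_im, ha, hb]
    ring
  have him : (star v ⬝ᵥ (M.map (Complex.ofReal)) *ᵥ v).im = 0 := by
    rw [expand, Complex.im_sum]
    simp only [Complex.im_sum]
    have key : ∀ i j, ((starRingEnd ℂ) (v i) * ((M i j : ℂ) * v j)).im
        = M i j * (a i * b j - b i * a j) := by
      intro i j
      simp [Complex.mul_re, Complex.mul_im, ha, hb]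
      ring
    simp only [key]
    have : (∑ i, ∑ j, M i j * (a i * b j - b i * a j))
        = -(∑ i, ∑ j, M i j * (a i * b j - b i * a j)) := by
      nth_rewrite 1 [Finset.sum_comm]
      rw [← Finset.sum_neg_distrib]
      refine Finset.sum_congr rfl fun i _ => ?_
      rw [← Finset.sum_neg_distrib]
      refine Finset.sum_congr rfl fun j _ => ?_
      rw [hsymm i j]
      ring
    linarith
  refine ⟨a ⬝ᵥ M *ᵥ a + b ⬝ᵥ M *ᵥ b, ?_, ?_⟩
  · have hab : a ≠ 0 ∨ b ≠ 0 := by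
      by_contra h
      push_neg at h
      apply hv
      funext i
      have h1 : a i = 0 := by rw [h.1]; rfl
      have h2 : b i = 0 := by rw [h.2]; rfl
      exact Complex.ext h1 h2
    have hA : 0 ≤ a ⬝ᵥ M *ᵥ a := by
      have := hM.posSemidef.dotProduct_mulVec_nonneg a; simpa using this
    have hB : 0 ≤ b ⬝ᵥ M *ᵥ b := by
      have := hM.posSemidef.dotProduct_mulVec_nonneg b; simpa using this
    rcases hab with h | h
    · have h' := hM.dotProduct_mulVec_pos h
      have : 0 < a ⬝ᵥ M *ᵥ a := by simpa using h'
      linarith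
    · have h' := hM.dotProduct_mulVec_pos h
      have : 0 < b ⬝ᵥ M *ᵥ b := by simpa using h'
      linarith
  · exact Complex.ext (by simpa using hre) (by simpa using him)

lemma conjT_map {n : ℕ} (A : Matrix (Fin n) (Fin n) ℝ) :
    (A.map (Complex.ofReal))ᴴ = Aᵀ.map (Complex.ofReal) := by
  ext i j
  simp [conjTranspose_apply, Matrix.map_apply]

lemma map_mul'' {n : ℕ} (M N : Matrix (Fin n) (Fin n) ℝ) :
    (M * N).map (Complex.ofReal) = M.map Complex.ofReal * N.map Complex.ofReal := by
  ext i j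
  simp [Matrix.mul_apply, Matrix.map_apply]

lemma hurwitz_of_lyap {n : ℕ} (A Sig Sw : Matrix (Fin n) (Fin n) ℝ) (hSig : Sig.PosDef)
    (hSw : Sw.PosDef) (hlyap : A * Sig + Sig * Aᵀ = -Sw) (μ : ℂ)
    (hμ : μ ∈ spectrum ℂ (A.map (Complex.ofReal))) : μ.re < 0 := by
  classical
  set Ac := A.map (Complex.ofReal) with hAc
  have hdet : (Matrix.scalar (Fin n) μ - Ac).det = 0 := (mem_spec_iff _ _).1 hμ
  have hdetH : ((Matrix.scalar (Fin n) μ - Ac)ᴴ).det = 0 := by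
    rw [Matrix.det_conjTranspose, hdet, star_zero]
  have hform : (Matrix.scalar (Fin n) μ - Ac)ᴴ
      = Matrix.scalar (Fin n) (starRingEnd ℂ μ) - Acᴴ := by
    rw [conjTranspose_sub]
    congr 1
    ext i j
    rcases eq_or_ne i j with rfl | hne
    · simp [Matrix.scalar_apply, conjTranspose_apply]
    · simp [Matrix.scalar_apply, conjTranspose_apply, Matrix.diagonal, hne, Ne.symm hne]
  rw [hform] at hdetH
  obtain ⟨v, hv, hveq⟩ := (Matrix.exists_mulVec_eq_zero_iff).2 hdetH
  have heig : Acᴴ *ᵥ v = (starRingEnd ℂ μ) • v := by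
    rw [Matrix.sub_mulVec] at hveq
    have hscal : (Matrix.scalar (Fin n) (starRingEnd ℂ μ)) *ᵥ v = (starRingEnd ℂ μ) • v := by
      ext i
      simp [Matrix.scalar_apply, Matrix.mulVec_diagonal]
    rw [hscal] at hveq
    linear_combination (norm := module) -hveq
  set Sc := Sig.map (Complex.ofReal) with hSc
  set Wc := Sw.map (Complex.ofReal) with hWc
  have hlyapC : Ac * Sc + Sc * Acᵀ = -Wc := by
    rw [hAc, hSc, hWc, ← map_mul'', ← Matrix.transpose_map, ← map_mul'']
    ext i j
    have hij := congrFun (congrFun hlyap i) j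
    simp only [Matrix.add_apply, Matrix.neg_apply] at hij ⊢
    simp only [Matrix.map_apply, ← Complex.ofReal_add, ← Complex.ofReal_neg]
    exact congrArg Complex.ofReal hij
  obtain ⟨r, hr, hrt⟩ := quad_pos hSig v hv
  obtain ⟨s, hs, hst⟩ := quad_pos hSw v hv
  rw [← hSc] at hrt
  rw [← hWc] at hst
  have hAcT : Acᵀ = Acᴴ := by rw [conjT_map, ← Matrix.transpose_map]
  have hvecmul : star v ᵥ* Ac = μ • star v := by
    have hst2 := congrArg star heig
    rw [Matrix.star_mulVec, conjTranspose_conjTranspose, star_smul] at hst2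
    simpa using hst2
  have eq1 : star v ⬝ᵥ ((Ac * Sc) *ᵥ v) = μ * (r : ℂ) := by
    rw [← Matrix.mulVec_mulVec, Matrix.dotProduct_mulVec, hvecmul,
      smul_dotProduct]
    rw [hrt]
    simp
  have eq2 : star v ⬝ᵥ ((Sc * Acᵀ) *ᵥ v) = (starRingEnd ℂ μ) * (r : ℂ) := by
    rw [← Matrix.mulVec_mulVec, hAcT, heig, Matrix.mulVec_smul, dotProduct_smul, hrt]
    simp
  have eqfin : μ * (r : ℂ) + (starRingEnd ℂ μ) * (r : ℂ) = -(s : ℂ) := by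
    rw [← eq1, ← eq2, ← dotProduct_add, ← Matrix.add_mulVec, hlyapC]
    rw [Matrix.neg_mulVec, dotProduct_neg, hst]
  have hcast : ((2 * μ.re * r : ℝ) : ℂ) = ((-s : ℝ) : ℂ) := by
    push_cast
    rw [← eqfin, ← add_mul, Complex.add_conj]
    push_cast
    ring
  have hre2 : 2 * μ.re * r = -s := Complex.ofReal_injective hcast
  nlinarith

end Helpers

/-- A real matrix is Hurwitz stable if all its (complex) eigenvalues have
strictly negative real part. -/
def IsHurwitz {n : ℕ} (A : Matrix (Fin n) (Fin n) ℝ) : Prop :=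
  ∀ μ ∈ spectrum ℂ (A.map (Complex.ofReal)), μ.re < 0

theorem stmt3 {n : ℕ} (Sw Sig1 Sig2 S1 S2 : Matrix (Fin n) (Fin n) ℝ)
    (hSw : Sw.PosDef) (hSig1 : Sig1.PosDef) (hSig2 : Sig2.PosDef)
    (hS1 : S1ᵀ = -S1) (hS2 : S2ᵀ = -S2)
    (hEq : ((-(1/2 : ℝ)) • Sw + S1) * Sig1⁻¹ = ((-(1/2 : ℝ)) • Sw + S2) * Sig2⁻¹) :
    Sig1 = Sig2 ∧ S1 = S2 := by
  classical
  rcases Nat.eq_zero_or_pos n with hn | hn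
  · subst hn
    constructor <;> (ext i j; exact i.elim0)
  have hd1 : IsUnit Sig1.det := hSig1.det_pos.ne'.isUnit
  have hd2 : IsUnit Sig2.det := hSig2.det_pos.ne'.isUnit
  set A := ((-(1/2 : ℝ)) • Sw + S1) * Sig1⁻¹ with hA
  have h1 : A * Sig1 = (-(1/2 : ℝ)) • Sw + S1 := by
    rw [hA, Matrix.nonsing_inv_mul_cancel_right _ _ hd1]
  have h2 : A * Sig2 = (-(1/2 : ℝ)) • Sw + S2 := by
    rw [hEq, Matrix.nonsing_inv_mul_cancel_right _ _ hd2]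
  have herm : ∀ (M : Matrix (Fin n) (Fin n) ℝ), M.IsHermitian → Mᵀ = M := by
    intro M hM
    ext i j
    have := congrFun (congrFun hM.eq i) j
    simpa using this
  have hSwT : Swᵀ = Sw := herm _ hSw.1
  have hSig1T : Sig1ᵀ = Sig1 := herm _ hSig1.1
  have hSig2T : Sig2ᵀ = Sig2 := herm _ hSig2.1
  have hT1 : Sig1 * Aᵀ = (-(1/2 : ℝ)) • Sw - S1 := by
    have h := congrArg Matrix.transpose h1
    rw [Matrix.transpose_mul, Matrix.transpose_add, Matrix.transpose_smul, hSwT, hS1,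
      hSig1T] at h
    rw [h, sub_eq_add_neg]
  have hT2 : Sig2 * Aᵀ = (-(1/2 : ℝ)) • Sw - S2 := by
    have h := congrArg Matrix.transpose h2
    rw [Matrix.transpose_mul, Matrix.transpose_add, Matrix.transpose_smul, hSwT, hS2,
      hSig2T] at h
    rw [h, sub_eq_add_neg]
  have lyap1 : A * Sig1 + Sig1 * Aᵀ = -Sw := by
    rw [h1, hT1]
    module
  have lyap2 : A * Sig2 + Sig2 * Aᵀ = -Sw := by
    rw [h2, hT2]
    module
  have hAD : A * (Sig1 - Sig2) = (Sig1 - Sig2) * (-Aᵀ) := by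
    have h3 : A * Sig1 + Sig1 * Aᵀ = A * Sig2 + Sig2 * Aᵀ := by rw [lyap1, lyap2]
    rw [Matrix.mul_sub, Matrix.sub_mul, Matrix.mul_neg, Matrix.mul_neg]
    have h4 : A * Sig1 - A * Sig2 = -(Sig1 * Aᵀ) + Sig2 * Aᵀ := by
      rw [sub_eq_iff_eq_add]
      calc A * Sig1 = A * Sig2 + Sig2 * Aᵀ - Sig1 * Aᵀ := by rw [← h3]; abel
        _ = -(Sig1 * Aᵀ) + Sig2 * Aᵀ + A * Sig2 := by abel
    rw [h4]
    abel
  set Ac := A.map Complex.ofReal with hAc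
  set Dc := (Sig1 - Sig2).map Complex.ofReal with hDc
  set Bc := (-Aᵀ).map Complex.ofReal with hBc
  have hDB : Dc * Bc = Ac * Dc := by
    rw [hDc, hBc, hAc, ← map_mul'', ← map_mul'', hAD]
  set q := Ac.charpoly with hq
  have hq0 : aeval Ac q = 0 := Matrix.aeval_self_charpoly Ac
  have hzero : Dc * aeval Bc q = 0 := by
    rw [aeval_semiconj hDB q, hq0, zero_mul]
  have hdeg : 0 < q.degree := by
    rw [hq, Matrix.charpoly_degree_eq_dim, Fintype.card_fin]
    exact_mod_cast hn
  have hhur : ∀ μ ∈ spectrum ℂ Ac, μ.re < 0 :=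
    fun μ hμ => hurwitz_of_lyap A Sig1 Sw hSig1 hSw lyap1 μ hμ
  have hBAc : Bc = -Acᵀ := by
    rw [hBc, hAc, ← Matrix.transpose_map]
    ext i j
    simp [Matrix.map_apply]
  have hunit : IsUnit (aeval Bc q) := by
    by_contra hnu
    have h0spec : (0 : ℂ) ∈ spectrum ℂ (aeval Bc q) := by
      rw [spectrum.mem_iff]
      simpa using hnu
    rw [spectrum.map_polynomial_aeval_of_degree_pos Bc q hdeg] at h0spec
    obtain ⟨μ, hμB, hμq⟩ := h0spec
    have hμA : μ ∈ spectrum ℂ Ac := (mem_spec_iff' Ac μ).2 hμq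
    have hmμA : -μ ∈ spectrum ℂ Ac := by
      rw [mem_spec_iff] at hμB ⊢
      have hform : Matrix.scalar (Fin n) μ - Bc = -((Matrix.scalar (Fin n) (-μ) - Ac)ᵀ) := by
        rw [hBAc, Matrix.transpose_sub]
        have hsT : (Matrix.scalar (Fin n) (-μ))ᵀ = Matrix.scalar (Fin n) (-μ) := by
          simp [Matrix.scalar_apply, Matrix.diagonal_transpose]
        have hneg : Matrix.scalar (Fin n) (-μ) = -(Matrix.scalar (Fin n) μ) := by
          simp [map_neg]
        rw [hsT, hneg]
        abel
      rw [hform, Matrix.det_neg, Matrix.det_transpose, mul_eq_zero] at hμB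
      rcases hμB with h | h
      · exact absurd h (pow_ne_zero _ (by norm_num))
      · exact h
    have hr1 := hhur μ hμA
    have hr2 := hhur (-μ) hmμA
    simp only [Complex.neg_re] at hr2
    linarith
  obtain ⟨E, hE⟩ := hunit.exists_right_inv
  have hD0 : Dc = 0 := by
    calc Dc = Dc * ((aeval Bc q) * E) := by rw [hE, mul_one]
      _ = (Dc * aeval Bc q) * E := by rw [mul_assoc]
      _ = 0 := by rw [hzero, zero_mul]
  have hDreal : Sig1 - Sig2 = 0 := by
    ext i j
    have := congrFun (congrFun hD0 i) j
    simp only [hDc, Matrix.map_apply, Matrix.zero_apply, Complex.ofReal_eq_zero] at this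
    simpa using this
  have hSig : Sig1 = Sig2 := sub_eq_zero.1 hDreal
  refine ⟨hSig, ?_⟩
  have h5 : (-(1/2 : ℝ)) • Sw + S1 = (-(1/2 : ℝ)) • Sw + S2 := by
    rw [← h1, ← h2, hSig]
  exact add_left_cancel h5
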